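/- Under hypotheses (C₁)-(C₂) as above, the linear operator L₁: C̃_φ → C̃_φ, L₁u(t) = ∫_ℝ |k(t,s)η(s)| u(s) ds, is a compact (completely continuous) operator: it maps bounded sets in C̃_φ to relatively compact sets. -/

import Mathlib

open MeasureTheory Filter

/-- A function `g : ℝ → ℝ` "extends continuously to `ℝ̄ = [-∞,+∞]`":
it is continuous and has finite limits at `±∞`. -/
def ExtR (g : ℝ → ℝ) : Prop :=
  Continuous g ∧ (∃ a : ℝ, Filter.Tendsto g Filter.atTop (nhds a)) ∧
    (∃ b : ℝ, Filter.Tendsto g Filter.atBot (nhds b))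

/-- The space `C̃_φ` of continuous `φ`-extensions to infinity. -/
def Ctilde (φ f : ℝ → ℝ) : Prop :=
  Continuous f ∧ ∃ g : ℝ → ℝ, ExtR g ∧ f = fun t => φ t * g t

/-- Under (C₁)-(C₂) the operator `L₁u(t) = ∫ |k(t,s)η(s)| u(s) ds` is compact
on `C̃_φ`: the image of any `‖·‖_φ`-bounded sequence has a subsequence whose
image converges in `C̃_φ`. -/
theorem stmt9 (φ : ℝ → ℝ) (hφc : Continuous φ) (hφ : ∀ t, 0 < φ t)
    (k : ℝ → ℝ → ℝ) (η : ℝ → ℝ)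
    (hmeas : ∀ t, Measurable fun s => k t s * η s)
    (hker : ∀ s, Ctilde φ fun t => k t s * η s)
    -- (C₁): equicontinuity-type bound
    (hC1 : ∀ ε : ℝ, 0 < ε → ∃ δ : ℝ, 0 < δ ∧ ∃ ω : ℝ → ℝ, Measurable ω ∧
      (∀ s, 0 ≤ ω s) ∧ Integrable (fun s => ω s * φ s) ∧
      ∀ t₁ t₂ : ℝ, |t₁ - t₂| < δ → ∀ s,
        abs (|k t₁ s * η s| / φ t₁ - |k t₂ s * η s| / φ t₂) ≤ ε * ω s)
    -- (C₂): domination and limits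
    (M : ℝ → ℝ) (hMdom : ∀ t s, |k t s * η s| / φ t ≤ M s)
    (hMint : Integrable (fun s => M s * φ s))
    (zp zm : ℝ → ℝ)
    (hzp : ∀ s, Tendsto (fun t => |k t s * η s| / φ t) atTop (nhds (zp s)))
    (hzm : ∀ s, Tendsto (fun t => |k t s * η s| / φ t) atBot (nhds (zm s)))
    (hzpint : Integrable (fun s => zp s * φ s))
    (hzmint : Integrable (fun s => zm s * φ s))
    -- a `‖·‖_φ`-bounded sequence in `C̃_φ`
    (u : ℕ → ℝ → ℝ) (hu : ∀ n, Ctilde φ (u n))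
    (R : ℝ) (hR : ∀ n t, |u n t| ≤ R * φ t) :
    ∃ g : ℕ → ℕ, StrictMono g ∧ ∃ v : ℝ → ℝ, Ctilde φ v ∧
      Tendsto (fun m => ⨆ t : ℝ, |(∫ s, |k t s * η s| * u (g m) s) - v t| / φ t)
        atTop (nhds 0) := by
  classical
  have hφ0 : ∀ t : ℝ, φ t ≠ 0 := fun t => (hφ t).ne'
  have hR0 : 0 ≤ R := by
    have h := hR 0 0
    have h0 := abs_nonneg (u 0 0)
    nlinarith [hφ 0]
  set κ : ℝ → ℝ → ℝ := fun t s => |k t s * η s| / φ t with hκdef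
  have hκ_nonneg : ∀ t s, 0 ≤ κ t s := fun t s => div_nonneg (abs_nonneg _) (hφ t).le
  have hκle : ∀ t s, κ t s ≤ M s := fun t s => hMdom t s
  have hM0 : ∀ s, 0 ≤ M s := fun s => le_trans (hκ_nonneg 0 s) (hκle 0 s)
  have hκmeas : ∀ t, Measurable (κ t) := fun t => ((hmeas t).abs).div_const _
  have hκcont : ∀ s, Continuous fun t => κ t s := fun s =>
    (((hker s).1).abs).div hφc hφ0
  have hucont : ∀ n, Continuous (u n) := fun n => (hu n).1
  have hMφint : Integrable (fun s => M s * φ s) := hMint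
  -- basic nonnegativity / bounds for zp, zm
  have hzp_nonneg : ∀ s, 0 ≤ zp s := fun s =>
    ge_of_tendsto (hzp s) (Eventually.of_forall fun t => hκ_nonneg t s)
  have hzp_le : ∀ s, zp s ≤ M s := fun s =>
    le_of_tendsto (hzp s) (Eventually.of_forall fun t => hκle t s)
  have hzm_nonneg : ∀ s, 0 ≤ zm s := fun s =>
    ge_of_tendsto (hzm s) (Eventually.of_forall fun t => hκ_nonneg t s)
  have hzm_le : ∀ s, zm s ≤ M s := fun s =>
    le_of_tendsto (hzm s) (Eventually.of_forall fun t => hκle t s)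
  -- measurability of zp, zm
  have hφaesm : AEStronglyMeasurable φ (volume : Measure ℝ) :=
    hφc.aestronglyMeasurable
  have hzpaesm : AEStronglyMeasurable zp (volume : Measure ℝ) := by
    have h1 : AEMeasurable (fun s => (zp s * φ s) / φ s) (volume : Measure ℝ) :=
      hzpint.1.aemeasurable.div hφc.measurable.aemeasurable
    have h2 : (fun s => (zp s * φ s) / φ s) = zp := by
      funext s; exact mul_div_cancel_right₀ (zp s) (hφ0 s)
    rw [h2] at h1
    exact h1.aestronglyMeasurable
  have hzmaesm : AEStronglyMeasurable zm (volume : Measure ℝ) := by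
    have h1 : AEMeasurable (fun s => (zm s * φ s) / φ s) (volume : Measure ℝ) :=
      hzmint.1.aemeasurable.div hφc.measurable.aemeasurable
    have h2 : (fun s => (zm s * φ s) / φ s) = zm := by
      funext s; exact mul_div_cancel_right₀ (zm s) (hφ0 s)
    rw [h2] at h1
    exact h1.aestronglyMeasurable
  -- integrability of the integrands
  have int_κu : ∀ t n, Integrable (fun s => κ t s * u n s) := by
    intro t n
    refine Integrable.mono' (hMint.const_mul R)
      (((hκmeas t).aestronglyMeasurable).mul (hucont n).aestronglyMeasurable)
      (Eventually.of_forall fun s => ?_)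
    rw [Real.norm_eq_abs, abs_mul, abs_of_nonneg (hκ_nonneg t s)]
    calc κ t s * |u n s| ≤ M s * (R * φ s) :=
          mul_le_mul (hκle t s) (hR n s) (abs_nonneg _) (hM0 s)
      _ = R * (M s * φ s) := by ring
  have int_zpu : ∀ n, Integrable (fun s => zp s * u n s) := by
    intro n
    refine Integrable.mono' (hMint.const_mul R)
      (hzpaesm.mul (hucont n).aestronglyMeasurable)
      (Eventually.of_forall fun s => ?_)
    rw [Real.norm_eq_abs, abs_mul, abs_of_nonneg (hzp_nonneg s)]
    calc zp s * |u n s| ≤ M s * (R * φ s) :=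
          mul_le_mul (hzp_le s) (hR n s) (abs_nonneg _) (hM0 s)
      _ = R * (M s * φ s) := by ring
  have int_zmu : ∀ n, Integrable (fun s => zm s * u n s) := by
    intro n
    refine Integrable.mono' (hMint.const_mul R)
      (hzmaesm.mul (hucont n).aestronglyMeasurable)
      (Eventually.of_forall fun s => ?_)
    rw [Real.norm_eq_abs, abs_mul, abs_of_nonneg (hzm_nonneg s)]
    calc zm s * |u n s| ≤ M s * (R * φ s) :=
          mul_le_mul (hzm_le s) (hR n s) (abs_nonneg _) (hM0 s)
      _ = R * (M s * φ s) := by ring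
  -- abs helper for a.e.-strongly measurable functions
  have absaesm : ∀ {f : ℝ → ℝ}, AEStronglyMeasurable f (volume : Measure ℝ) →
      AEStronglyMeasurable (fun s => |f s|) (volume : Measure ℝ) := by
    intro f hf
    exact hf.norm.congr (Eventually.of_forall fun s => (Real.norm_eq_abs _).symm) |>.congr
      (Eventually.of_forall fun s => rfl)
  -- integrability of the comparison integrands
  have int_κφ : ∀ t, Integrable (fun s => κ t s * φ s) := by
    intro t
    refine Integrable.mono' hMint
      (((hκmeas t).aestronglyMeasurable).mul hφaesm)
      (Eventually.of_forall fun s => ?_)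
    rw [Real.norm_eq_abs, abs_mul, abs_of_nonneg (hκ_nonneg t s), abs_of_nonneg (hφ s).le]
    exact mul_le_mul_of_nonneg_right (hκle t s) (hφ s).le
  have int_diffφ : ∀ (a : ℝ → ℝ), AEStronglyMeasurable a (volume : Measure ℝ) →
      (∀ s, 0 ≤ a s) → (∀ s, a s ≤ M s) → ∀ t,
      Integrable (fun s => |κ t s - a s| * φ s) := by
    intro a ha ha0 haM t
    refine Integrable.mono' (hMint.const_mul 2)
      ((absaesm (((hκmeas t).aestronglyMeasurable).sub ha)).mul hφaesm)
      (Eventually.of_forall fun s => ?_)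
    rw [Real.norm_eq_abs, abs_mul, abs_abs, abs_of_nonneg (hφ s).le]
    have h1 : |κ t s - a s| ≤ 2 * M s := by
      have := abs_sub_abs_le_abs_sub (κ t s) (a s)
      have h2 : |κ t s - a s| ≤ |κ t s| + |a s| := abs_sub (κ t s) (a s)
      rw [abs_of_nonneg (hκ_nonneg t s), abs_of_nonneg (ha0 s)] at h2
      linarith [hκle t s, haM s]
    calc |κ t s - a s| * φ s ≤ (2 * M s) * φ s :=
          mul_le_mul_of_nonneg_right h1 (hφ s).le
      _ = 2 * (M s * φ s) := by ring
  -- the key estimate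
  have key : ∀ (n : ℕ) (a b : ℝ → ℝ), Integrable (fun s => a s * u n s) →
      Integrable (fun s => b s * u n s) → Integrable (fun s => |a s - b s| * φ s) →
      |(∫ s, a s * u n s) - ∫ s, b s * u n s| ≤ R * ∫ s, |a s - b s| * φ s := by
    intro n a b ha hb hab
    rw [← integral_sub ha hb]
    have h1 : (fun s => a s * u n s - b s * u n s) = fun s => (a s - b s) * u n s := by
      funext s; ring
    rw [h1]
    have hint : Integrable (fun s => (a s - b s) * u n s) := by
      refine (ha.sub hb).congr (Eventually.of_forall fun s => ?_)
      simp only [Pi.sub_apply]; ring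
    calc |∫ s, (a s - b s) * u n s| ≤ ∫ s, |a s - b s| * |u n s| := by
          have h := norm_integral_le_integral_norm
            (μ := (volume : Measure ℝ)) (fun s => (a s - b s) * u n s)
          simpa [Real.norm_eq_abs, abs_mul] using h
      _ ≤ ∫ s, R * (|a s - b s| * φ s) := by
          refine integral_mono ?_ (hab.const_mul R) fun s => ?_
          · exact hint.abs.congr (Eventually.of_forall fun s => by simp [abs_mul])
          · calc |a s - b s| * |u n s| ≤ |a s - b s| * (R * φ s) :=
                  mul_le_mul_of_nonneg_left (hR n s) (abs_nonneg _)
              _ = R * (|a s - b s| * φ s) := by ring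
      _ = R * ∫ s, |a s - b s| * φ s := integral_const_mul R _
  -- definitions
  set G : ℕ → ℝ → ℝ := fun n t => ∫ s, κ t s * u n s with hGdef
  set A : ℕ → ℝ := fun n => ∫ s, zp s * u n s with hAdef
  set Bz : ℕ → ℝ := fun n => ∫ s, zm s * u n s with hBzdef
  set b₀ : ℝ := R * ∫ s, M s * φ s with hb₀def
  -- uniform bound
  have habs_le : ∀ (f : ℝ → ℝ), Integrable f → (∀ s, |f s| ≤ R * (M s * φ s)) →
      |∫ s, f s| ≤ b₀ := by
    intro f hf hfb
    calc |∫ s, f s| ≤ ∫ s, |f s| := by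
          simpa [Real.norm_eq_abs] using norm_integral_le_integral_norm f
      _ ≤ ∫ s, R * (M s * φ s) := integral_mono hf.abs (hMint.const_mul R) hfb
      _ = b₀ := integral_const_mul R _
  have hGbd : ∀ n t, |G n t| ≤ b₀ := by
    intro n t
    refine habs_le _ (int_κu t n) fun s => ?_
    rw [abs_mul, abs_of_nonneg (hκ_nonneg t s)]
    calc κ t s * |u n s| ≤ M s * (R * φ s) :=
          mul_le_mul (hκle t s) (hR n s) (abs_nonneg _) (hM0 s)
      _ = R * (M s * φ s) := by ring
  have hAbd : ∀ n, |A n| ≤ b₀ := by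
    intro n
    refine habs_le _ (int_zpu n) fun s => ?_
    rw [abs_mul, abs_of_nonneg (hzp_nonneg s)]
    calc zp s * |u n s| ≤ M s * (R * φ s) :=
          mul_le_mul (hzp_le s) (hR n s) (abs_nonneg _) (hM0 s)
      _ = R * (M s * φ s) := by ring
  have hBzbd : ∀ n, |Bz n| ≤ b₀ := by
    intro n
    refine habs_le _ (int_zmu n) fun s => ?_
    rw [abs_mul, abs_of_nonneg (hzm_nonneg s)]
    calc zm s * |u n s| ≤ M s * (R * φ s) :=
          mul_le_mul (hzm_le s) (hR n s) (abs_nonneg _) (hM0 s)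
      _ = R * (M s * φ s) := by ring
  -- the modulus functions
  set ψ : ℝ → ℝ → ℝ := fun t₀ t => ∫ s, |κ t s - κ t₀ s| * φ s with hψdef
  set τp : ℝ → ℝ := fun t => ∫ s, |κ t s - zp s| * φ s with hτpdef
  set τm : ℝ → ℝ := fun t => ∫ s, |κ t s - zm s| * φ s with hτmdef
  have int_ψ : ∀ t₀ t, Integrable (fun s => |κ t s - κ t₀ s| * φ s) := fun t₀ t =>
    int_diffφ (κ t₀) (hκmeas t₀).aestronglyMeasurable (hκ_nonneg t₀) (hκle t₀) t
  have int_τp : ∀ t, Integrable (fun s => |κ t s - zp s| * φ s) := fun t =>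
    int_diffφ zp hzpaesm hzp_nonneg hzp_le t
  have int_τm : ∀ t, Integrable (fun s => |κ t s - zm s| * φ s) := fun t =>
    int_diffφ zm hzmaesm hzm_nonneg hzm_le t
  -- domination for DCT
  have hdom : ∀ (a : ℝ → ℝ), (∀ s, 0 ≤ a s) → (∀ s, a s ≤ M s) → ∀ t s,
      ‖|κ t s - a s| * φ s‖ ≤ 2 * (M s * φ s) := by
    intro a ha0 haM t s
    rw [Real.norm_eq_abs, abs_mul, abs_abs, abs_of_nonneg (hφ s).le]
    have h2 : |κ t s - a s| ≤ |κ t s| + |a s| := abs_sub (κ t s) (a s)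
    rw [abs_of_nonneg (hκ_nonneg t s), abs_of_nonneg (ha0 s)] at h2
    have h1 : |κ t s - a s| ≤ 2 * M s := by linarith [hκle t s, haM s]
    calc |κ t s - a s| * φ s ≤ (2 * M s) * φ s :=
          mul_le_mul_of_nonneg_right h1 (hφ s).le
      _ = 2 * (M s * φ s) := by ring
  -- ψ tends to 0 at each point
  have hψ0 : ∀ t₀, Tendsto (ψ t₀) (nhds t₀) (nhds 0) := by
    intro t₀
    have := tendsto_integral_filter_of_dominated_convergence
      (μ := (volume : Measure ℝ)) (F := fun t s => |κ t s - κ t₀ s| * φ s)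
      (f := fun _ => (0 : ℝ)) (l := nhds t₀)
      (fun s => 2 * (M s * φ s))
      (Eventually.of_forall fun t => (int_ψ t₀ t).1)
      (Eventually.of_forall fun t => Eventually.of_forall fun s =>
        hdom (κ t₀) (hκ_nonneg t₀) (hκle t₀) t s)
      (hMint.const_mul 2)
      (Eventually.of_forall fun s => by
        have h1 : Tendsto (fun t => κ t s - κ t₀ s) (nhds t₀) (nhds (κ t₀ s - κ t₀ s)) :=
          ((hκcont s).tendsto t₀).sub_const _
        have h2 := (h1.abs).mul_const (φ s)
        simpa using h2)
    simpa using this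
  have hτp0 : Tendsto τp atTop (nhds 0) := by
    have := tendsto_integral_filter_of_dominated_convergence
      (μ := (volume : Measure ℝ)) (F := fun t s => |κ t s - zp s| * φ s)
      (f := fun _ => (0 : ℝ)) (l := atTop)
      (fun s => 2 * (M s * φ s))
      (Eventually.of_forall fun t => (int_τp t).1)
      (Eventually.of_forall fun t => Eventually.of_forall fun s =>
        hdom zp hzp_nonneg hzp_le t s)
      (hMint.const_mul 2)
      (Eventually.of_forall fun s => by
        have h1 : Tendsto (fun t => κ t s - zp s) atTop (nhds (zp s - zp s)) :=
          (hzp s).sub_const _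
        have h2 := (h1.abs).mul_const (φ s)
        simpa using h2)
    simpa using this
  have hτm0 : Tendsto τm atBot (nhds 0) := by
    have := tendsto_integral_filter_of_dominated_convergence
      (μ := (volume : Measure ℝ)) (F := fun t s => |κ t s - zm s| * φ s)
      (f := fun _ => (0 : ℝ)) (l := atBot)
      (fun s => 2 * (M s * φ s))
      (Eventually.of_forall fun t => (int_τm t).1)
      (Eventually.of_forall fun t => Eventually.of_forall fun s =>
        hdom zm hzm_nonneg hzm_le t s)
      (hMint.const_mul 2)
      (Eventually.of_forall fun s => by
        have h1 : Tendsto (fun t => κ t s - zm s) atBot (nhds (zm s - zm s)) :=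
          (hzm s).sub_const _
        have h2 := (h1.abs).mul_const (φ s)
        simpa using h2)
    simpa using this
  have hψ_nonneg : ∀ t₀ t, 0 ≤ ψ t₀ t := fun t₀ t =>
    integral_nonneg fun s => mul_nonneg (abs_nonneg _) (hφ s).le
  have hτp_nonneg : ∀ t, 0 ≤ τp t := fun t =>
    integral_nonneg fun s => mul_nonneg (abs_nonneg _) (hφ s).le
  have hτm_nonneg : ∀ t, 0 ≤ τm t := fun t =>
    integral_nonneg fun s => mul_nonneg (abs_nonneg _) (hφ s).le
  -- estimates on G
  have hGdiff : ∀ n t t₀, |G n t - G n t₀| ≤ R * ψ t₀ t := fun n t t₀ =>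
    key n (κ t) (κ t₀) (int_κu t n) (int_κu t₀ n) (int_ψ t₀ t)
  have hGA : ∀ n t, |G n t - A n| ≤ R * τp t := fun n t =>
    key n (κ t) zp (int_κu t n) (int_zpu n) (int_τp t)
  have hGB : ∀ n t, |G n t - Bz n| ≤ R * τm t := fun n t =>
    key n (κ t) zm (int_κu t n) (int_zmu n) (int_τm t)
  have tri3 : ∀ w x y z : ℝ, |w - z| ≤ |w - x| + |x - y| + |y - z| := by
    intro w x y z
    have h1 := abs_sub_le w x z
    have h2 := abs_sub_le x y z
    linarith
  -- extraction of a subsequence via compactness of a product space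
  set X : Type := (ℚ → ℝ) × ℝ × ℝ with hXdef
  set x : ℕ → X := fun n => (fun q => G n (q : ℝ), A n, Bz n) with hxdef
  set K : Set X := (Set.univ.pi fun _ : ℚ => Set.Icc (-b₀) b₀) ×ˢ
    (Set.Icc (-b₀) b₀ ×ˢ Set.Icc (-b₀) b₀) with hKdef
  have hKcpt : IsCompact K :=
    (isCompact_univ_pi fun _ => isCompact_Icc).prod (isCompact_Icc.prod isCompact_Icc)
  have hxK : ∀ n, x n ∈ K := by
    intro n
    refine ⟨fun q _ => ?_, ?_, ?_⟩
    · exact abs_le.1 (hGbd n q)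
    · exact abs_le.1 (hAbd n)
    · exact abs_le.1 (hBzbd n)
  obtain ⟨a, -, g, hg, hga⟩ := hKcpt.tendsto_subseq hxK
  refine ⟨g, hg, ?_⟩
  -- componentwise limits
  have htq : ∀ q : ℚ, Tendsto (fun m => G (g m) (q : ℝ)) atTop (nhds (a.1 q)) := by
    intro q
    have h1 : Tendsto (fun m => (x (g m)).1 q) atTop (nhds (a.1 q)) :=
      ((continuous_apply q).comp continuous_fst).continuousAt.tendsto.comp hga
    exact h1
  have hAlim : Tendsto (fun m => A (g m)) atTop (nhds a.2.1) :=
    (continuous_fst.comp continuous_snd).continuousAt.tendsto.comp hga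
  have hBlim : Tendsto (fun m => Bz (g m)) atTop (nhds a.2.2) :=
    (continuous_snd.comp continuous_snd).continuousAt.tendsto.comp hga
  -- pointwise Cauchy at every real t
  have hCauchy : ∀ t : ℝ, CauchySeq fun m => G (g m) t := by
    intro t
    rw [Metric.cauchySeq_iff]
    intro ε hε
    have hden : (0:ℝ) < 2 * R + 2 := by linarith
    set ε' : ℝ := ε / (2 * R + 2) with hε'def
    have hε' : 0 < ε' := div_pos hε hden
    -- find a rational q with ψ t q < ε'
    have hev : ∀ᶠ t' in nhds t, ψ t t' < ε' :=
      (hψ0 t).eventually (eventually_lt_nhds hε')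
    obtain ⟨δ, hδ, hball⟩ := Metric.eventually_nhds_iff.1 hev
    obtain ⟨q, hq⟩ := exists_rat_near t hδ
    have hψq : ψ t (q : ℝ) < ε' := by
      apply hball
      rw [Real.dist_eq]
      rwa [abs_sub_comm]
    -- Cauchy at q
    obtain ⟨N, hN⟩ := Metric.cauchySeq_iff.1 (htq q).cauchySeq ε' hε'
    refine ⟨N, fun m hm n hn => ?_⟩
    have h1 := hGdiff (g m) (q : ℝ) t
    have h2 := hGdiff (g n) (q : ℝ) t
    have h3 := hN m hm n hn
    rw [Real.dist_eq] at h3 ⊢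
    have hRψ : R * ψ t (q : ℝ) ≤ R * ε' := by
      exact mul_le_mul_of_nonneg_left hψq.le hR0
    calc |G (g m) t - G (g n) t|
        ≤ |G (g m) t - G (g m) (q:ℝ)| + |G (g m) (q:ℝ) - G (g n) (q:ℝ)|
            + |G (g n) (q:ℝ) - G (g n) t| := tri3 _ _ _ _
      _ < R * ε' + ε' + R * ε' := by
          have e1 : |G (g m) t - G (g m) (q:ℝ)| ≤ R * ε' := by
            rw [abs_sub_comm]; exact h1.trans hRψ
          have e2 : |G (g n) (q:ℝ) - G (g n) t| ≤ R * ε' := h2.trans hRψ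
          linarith
      _ ≤ ε := by
          have : (2 * R + 2) * ε' = ε := by
            rw [hε'def]; field_simp [hden.ne']
          nlinarith [hε'.le]
  -- the pointwise limit function
  set v₀ : ℝ → ℝ := fun t => limUnder atTop fun m => G (g m) t with hv₀def
  have hv₀ : ∀ t, Tendsto (fun m => G (g m) t) atTop (nhds (v₀ t)) := fun t =>
    (hCauchy t).tendsto_limUnder
  -- limit estimates transfer to v₀
  have hv₀diff : ∀ t t₀, |v₀ t - v₀ t₀| ≤ R * ψ t₀ t := by
    intro t t₀
    have h1 : Tendsto (fun m => |G (g m) t - G (g m) t₀|) atTop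
        (nhds |v₀ t - v₀ t₀|) := ((hv₀ t).sub (hv₀ t₀)).abs
    exact le_of_tendsto h1 (Eventually.of_forall fun m => hGdiff (g m) t t₀)
  have hv₀A : ∀ t, |v₀ t - a.2.1| ≤ R * τp t := by
    intro t
    have h1 : Tendsto (fun m => |G (g m) t - A (g m)|) atTop
        (nhds |v₀ t - a.2.1|) := ((hv₀ t).sub hAlim).abs
    exact le_of_tendsto h1 (Eventually.of_forall fun m => hGA (g m) t)
  have hv₀B : ∀ t, |v₀ t - a.2.2| ≤ R * τm t := by
    intro t
    have h1 : Tendsto (fun m => |G (g m) t - Bz (g m)|) atTop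
        (nhds |v₀ t - a.2.2|) := ((hv₀ t).sub hBlim).abs
    exact le_of_tendsto h1 (Eventually.of_forall fun m => hGB (g m) t)
  -- v₀ is continuous with limits at ±∞
  have hv₀cont : Continuous v₀ := by
    rw [continuous_iff_continuousAt]
    intro t₀
    rw [ContinuousAt, tendsto_iff_dist_tendsto_zero]
    have hb : Tendsto (fun t => R * ψ t₀ t) (nhds t₀) (nhds 0) := by
      have := (hψ0 t₀).const_mul R
      simpa using this
    exact squeeze_zero (fun t => dist_nonneg)
      (fun t => by rw [Real.dist_eq]; exact hv₀diff t t₀) hb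
  have hv₀top : Tendsto v₀ atTop (nhds a.2.1) := by
    rw [tendsto_iff_dist_tendsto_zero]
    have hb : Tendsto (fun t => R * τp t) atTop (nhds 0) := by
      have := hτp0.const_mul R
      simpa using this
    exact squeeze_zero (fun t => dist_nonneg)
      (fun t => by rw [Real.dist_eq]; exact hv₀A t) hb
  have hv₀bot : Tendsto v₀ atBot (nhds a.2.2) := by
    rw [tendsto_iff_dist_tendsto_zero]
    have hb : Tendsto (fun t => R * τm t) atBot (nhds 0) := by
      have := hτm0.const_mul R
      simpa using this
    exact squeeze_zero (fun t => dist_nonneg)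
      (fun t => by rw [Real.dist_eq]; exact hv₀B t) hb
  -- the limit element of C̃_φ
  refine ⟨fun t => φ t * v₀ t, ⟨hφc.mul hv₀cont, v₀,
    ⟨hv₀cont, ⟨a.2.1, hv₀top⟩, ⟨a.2.2, hv₀bot⟩⟩, rfl⟩, ?_⟩
  -- uniform convergence
  have main : ∀ ε : ℝ, 0 < ε → ∀ᶠ m in atTop, ∀ t, |G (g m) t - v₀ t| ≤ ε := by
    intro ε hε
    have hden : (0:ℝ) < 2 * R + 1 := by linarith
    set ε' : ℝ := ε / (2 * R + 1) with hε'def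
    have hε' : 0 < ε' := div_pos hε hden
    have hsum : 2 * (R * ε') + ε' ≤ ε := by
      have : (2 * R + 1) * ε' = ε := by rw [hε'def]; field_simp [hden.ne']
      nlinarith
    -- tail thresholds
    obtain ⟨Tp, hTp⟩ := (eventually_atTop.1
      (hτp0.eventually (eventually_le_nhds hε')))
    obtain ⟨Tm, hTm⟩ := (eventually_atBot.1
      (hτm0.eventually (eventually_le_nhds hε')))
    -- open cover of the compact middle part
    have hU : ∀ t₀ : ℝ, ∃ U : Set ℝ, (∀ t ∈ U, ψ t₀ t < ε') ∧ IsOpen U ∧ t₀ ∈ U := by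
      intro t₀
      exact eventually_nhds_iff.1 ((hψ0 t₀).eventually (eventually_lt_nhds hε'))
    choose U hUsmall hUopen hUmem using hU
    obtain ⟨F, hF⟩ := (isCompact_Icc (a := Tm) (b := Tp)).elim_finite_subcover
      U hUopen (fun t ht => Set.mem_iUnion.2 ⟨t, hUmem t⟩)
    -- eventual closeness at the finitely many centers, and of A, Bz
    have hmid : ∀ᶠ m in atTop, ∀ t₀ ∈ F, |G (g m) t₀ - v₀ t₀| ≤ ε' := by
      rw [eventually_all_finset]
      intro t₀ _
      have h1 := (hv₀ t₀).eventually (Metric.closedBall_mem_nhds (v₀ t₀) hε')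
      refine h1.mono fun m hm => ?_
      have h2 := Metric.mem_closedBall.1 hm
      rwa [Real.dist_eq] at h2
    have hAev : ∀ᶠ m in atTop, |A (g m) - a.2.1| ≤ ε' := by
      have h1 := hAlim.eventually (Metric.closedBall_mem_nhds a.2.1 hε')
      refine h1.mono fun m hm => ?_
      have h2 := Metric.mem_closedBall.1 hm
      rwa [Real.dist_eq] at h2
    have hBev : ∀ᶠ m in atTop, |Bz (g m) - a.2.2| ≤ ε' := by
      have h1 := hBlim.eventually (Metric.closedBall_mem_nhds a.2.2 hε')
      refine h1.mono fun m hm => ?_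
      have h2 := Metric.mem_closedBall.1 hm
      rwa [Real.dist_eq] at h2
    filter_upwards [hmid, hAev, hBev] with m hm hAm hBm
    intro t
    rcases le_or_gt t Tm with htm | htm
    · -- lower tail
      have h1 := hGB (g m) t
      have h2 := hv₀B t
      have hτ : τm t ≤ ε' := hTm t htm
      have e1 : |G (g m) t - Bz (g m)| ≤ R * ε' :=
        h1.trans (mul_le_mul_of_nonneg_left hτ hR0)
      have e2 : |v₀ t - a.2.2| ≤ R * ε' :=
        h2.trans (mul_le_mul_of_nonneg_left hτ hR0)
      calc |G (g m) t - v₀ t|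
          ≤ |G (g m) t - Bz (g m)| + |Bz (g m) - a.2.2| + |a.2.2 - v₀ t| :=
            tri3 _ _ _ _
        _ ≤ R * ε' + ε' + R * ε' := by
            have : |a.2.2 - v₀ t| = |v₀ t - a.2.2| := abs_sub_comm _ _
            rw [this]; linarith
        _ ≤ ε := by linarith
    rcases le_or_gt Tp t with htp | htp
    · -- upper tail
      have h1 := hGA (g m) t
      have h2 := hv₀A t
      have hτ : τp t ≤ ε' := hTp t htp
      have e1 : |G (g m) t - A (g m)| ≤ R * ε' :=
        h1.trans (mul_le_mul_of_nonneg_left hτ hR0)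
      have e2 : |v₀ t - a.2.1| ≤ R * ε' :=
        h2.trans (mul_le_mul_of_nonneg_left hτ hR0)
      calc |G (g m) t - v₀ t|
          ≤ |G (g m) t - A (g m)| + |A (g m) - a.2.1| + |a.2.1 - v₀ t| :=
            tri3 _ _ _ _
        _ ≤ R * ε' + ε' + R * ε' := by
            have : |a.2.1 - v₀ t| = |v₀ t - a.2.1| := abs_sub_comm _ _
            rw [this]; linarith
        _ ≤ ε := by linarith
    · -- middle part
      have htIcc : t ∈ Set.Icc Tm Tp := ⟨htm.le, htp.le⟩
      obtain ⟨t₀, ht₀F, htU⟩ := Set.mem_iUnion₂.1 (hF htIcc)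
      have hψt : ψ t₀ t < ε' := hUsmall t₀ t htU
      have e1 : |G (g m) t - G (g m) t₀| ≤ R * ε' :=
        (hGdiff (g m) t t₀).trans (mul_le_mul_of_nonneg_left hψt.le hR0)
      have e2 : |v₀ t₀ - v₀ t| ≤ R * ε' := by
        rw [abs_sub_comm]
        exact (hv₀diff t t₀).trans (mul_le_mul_of_nonneg_left hψt.le hR0)
      calc |G (g m) t - v₀ t|
          ≤ |G (g m) t - G (g m) t₀| + |G (g m) t₀ - v₀ t₀| + |v₀ t₀ - v₀ t| :=
            tri3 _ _ _ _
        _ ≤ R * ε' + ε' + R * ε' := by linarith [hm t₀ ht₀F]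
        _ ≤ ε := by linarith
  -- rewrite the sup expression
  have hrw : ∀ m t, |(∫ s, |k t s * η s| * u (g m) s) - φ t * v₀ t| / φ t
      = |G (g m) t - v₀ t| := by
    intro m t
    have h1 : (fun s => |k t s * η s| * u (g m) s)
        = fun s => φ t * (κ t s * u (g m) s) := by
      funext s
      show |k t s * η s| * u (g m) s = φ t * ((|k t s * η s| / φ t) * u (g m) s)
      field_simp
      rw [mul_div_assoc, div_self (hφ0 t), mul_one]
    have hGeq : (∫ s, κ t s * u (g m) s) = G (g m) t := rfl
    rw [h1, integral_const_mul, hGeq]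
    rw [show φ t * G (g m) t - φ t * v₀ t = φ t * (G (g m) t - v₀ t) by ring]
    rw [abs_mul, abs_of_pos (hφ t), mul_comm, mul_div_assoc, div_self (hφ0 t), mul_one]
  -- conclude
  show Tendsto (fun m => ⨆ t : ℝ,
    |(∫ s, |k t s * η s| * u (g m) s) - φ t * v₀ t| / φ t) atTop (nhds 0)
  rw [Metric.tendsto_atTop]
  intro ε hε
  have h2 : (0:ℝ) < ε / 2 := by linarith
  obtain ⟨N, hN⟩ := eventually_atTop.1 (main (ε / 2) h2)
  refine ⟨N, fun m hm => ?_⟩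
  have hub : (⨆ t : ℝ, |(∫ s, |k t s * η s| * u (g m) s) - φ t * v₀ t| / φ t) ≤ ε / 2 := by
    refine ciSup_le fun t => ?_
    rw [hrw m t]
    exact hN m hm t
  have hlb : 0 ≤ ⨆ t : ℝ, |(∫ s, |k t s * η s| * u (g m) s) - φ t * v₀ t| / φ t :=
    Real.iSup_nonneg fun t => div_nonneg (abs_nonneg _) (hφ t).le
  rw [Real.dist_eq, sub_zero, abs_of_nonneg hlb]
  linarith
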